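/- The language L_c = { w·c : w ∈ {a,b}*, |w|_a ≥ |w|_b } is not accepted by any RDFAwtl. -/

import Mathlib

/-- A nondeterministic finite automaton with translucent letters (NFAwtl). -/
structure NFAwtl (Q α : Type) where
  τ : Q → Set α
  I : Set Q
  F : Set Q
  δ : Q → α → Set Q
  tr : ∀ q a, a ∈ τ q → δ q a = ∅

namespace NFAwtl

variable {Q α : Type}

/-- One computation step of an NFAwtl: delete the leftmost non-translucent letter
and change state (the head returns to the left end). -/
def Step (A : NFAwtl Q α) : Q × List α → Q × List α → Prop := fun c c' =>
  ∃ u a v, c.2 = u ++ a :: v ∧ (∀ x ∈ u, x ∈ A.τ c.1) ∧ a ∉ A.τ c.1 ∧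
    c'.1 ∈ A.δ c.1 a ∧ c'.2 = u ++ v

/-- Acceptance: from some initial state, reach a configuration whose remaining
letters are all translucent for a final state. -/
def Accepts (A : NFAwtl Q α) (w : List α) : Prop :=
  ∃ q₀ ∈ A.I, ∃ q w', Relation.ReflTransGen A.Step (q₀, w) (q, w') ∧
    (∀ x ∈ w', x ∈ A.τ q) ∧ q ∈ A.F

def lang (A : NFAwtl Q α) : Set (List α) := { w | A.Accepts w }

/-- A DFAwtl: single initial state and at most one transition per state/letter. -/
def Deterministic (A : NFAwtl Q α) : Prop :=
  (∃ q₀, A.I = {q₀}) ∧ ∀ q a, (A.δ q a).Subsingleton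

end NFAwtl

/-- A repetitive NFAwtl (RNFAwtl): on the end-of-tape marker it may accept
(states in `Facc`) or change state via `δend` and continue. -/
structure RNFAwtl (Q α : Type) where
  τ : Q → Set α
  I : Set Q
  δ : Q → α → Set Q
  δend : Q → Set Q
  Facc : Set Q
  tr : ∀ q a, a ∈ τ q → δ q a = ∅
  accEnd : ∀ q, q ∈ Facc → δend q = ∅

namespace RNFAwtl

variable {Q α : Type}

/-- One computation step of an RNFAwtl: either delete the leftmost
non-translucent letter, or, when all remaining letters are translucent,
change state via a `◁`-transition and continue. -/
def Step (A : RNFAwtl Q α) : Q × List α → Q × List α → Prop := fun c c' =>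
  (∃ u a v, c.2 = u ++ a :: v ∧ (∀ x ∈ u, x ∈ A.τ c.1) ∧ a ∉ A.τ c.1 ∧
    c'.1 ∈ A.δ c.1 a ∧ c'.2 = u ++ v)
  ∨ ((∀ x ∈ c.2, x ∈ A.τ c.1) ∧ c'.1 ∈ A.δend c.1 ∧ c'.2 = c.2)

def Accepts (A : RNFAwtl Q α) (w : List α) : Prop :=
  ∃ q₀ ∈ A.I, ∃ q w', Relation.ReflTransGen A.Step (q₀, w) (q, w') ∧
    (∀ x ∈ w', x ∈ A.τ q) ∧ q ∈ A.Facc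

def lang (A : RNFAwtl Q α) : Set (List α) := { w | A.Accepts w }

/-- An RDFAwtl: single initial state and deterministic transitions. -/
def Deterministic (A : RNFAwtl Q α) : Prop :=
  (∃ q₀, A.I = {q₀}) ∧ (∀ q a, (A.δ q a).Subsingleton) ∧ ∀ q, (A.δend q).Subsingleton

end RNFAwtl

/-- A non-returning repetitive NFAwtl (nr-NFAwtl): the head continues from the
position of the last deleted letter; on the end-of-tape marker it may change
state and return the head to the left end. -/
structure NrNFAwtl (Q α : Type) where
  τ : Q → Set α
  I : Set Q
  δ : Q → α → Set Q
  δend : Q → Set Q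
  Facc : Set Q
  tr : ∀ q a, a ∈ τ q → δ q a = ∅
  accEnd : ∀ q, q ∈ Facc → δend q = ∅

namespace NrNFAwtl

variable {Q α : Type}

/-- Configurations are `(x, q, w)`: `x` is the already-skipped prefix, the head
is on the first letter of `w`. -/
def Step (A : NrNFAwtl Q α) :
    List α × Q × List α → List α × Q × List α → Prop := fun c c' =>
  (∃ u a v, c.2.2 = u ++ a :: v ∧ (∀ x ∈ u, x ∈ A.τ c.2.1) ∧ a ∉ A.τ c.2.1 ∧
    c'.2.1 ∈ A.δ c.2.1 a ∧ c'.1 = c.1 ++ u ∧ c'.2.2 = v)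
  ∨ ((∀ x ∈ c.2.2, x ∈ A.τ c.2.1) ∧ c'.2.1 ∈ A.δend c.2.1 ∧ c'.1 = [] ∧
    c'.2.2 = c.1 ++ c.2.2)

def Accepts (A : NrNFAwtl Q α) (w : List α) : Prop :=
  ∃ q₀ ∈ A.I, ∃ x q w', Relation.ReflTransGen A.Step ([], q₀, w) (x, q, w') ∧
    (∀ y ∈ w', y ∈ A.τ q) ∧ q ∈ A.Facc

def lang (A : NrNFAwtl Q α) : Set (List α) := { w | A.Accepts w }

def Deterministic (A : NrNFAwtl Q α) : Prop :=
  (∃ q₀, A.I = {q₀}) ∧ (∀ q a, (A.δ q a).Subsingleton) ∧ ∀ q, (A.δend q).Subsingleton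

end NrNFAwtl

/-- A non-repetitive non-returning NFAwtl (nr-nr-NFAwtl): non-returning, and it
must halt as soon as all remaining letters to the right are translucent. -/
structure NrnrNFAwtl (Q α : Type) where
  τ : Q → Set α
  I : Set Q
  F : Set Q
  δ : Q → α → Set Q
  tr : ∀ q a, a ∈ τ q → δ q a = ∅

namespace NrnrNFAwtl

variable {Q α : Type}

def Step (A : NrnrNFAwtl Q α) :
    List α × Q × List α → List α × Q × List α → Prop := fun c c' =>
  ∃ u a v, c.2.2 = u ++ a :: v ∧ (∀ x ∈ u, x ∈ A.τ c.2.1) ∧ a ∉ A.τ c.2.1 ∧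
    c'.2.1 ∈ A.δ c.2.1 a ∧ c'.1 = c.1 ++ u ∧ c'.2.2 = v

def Accepts (A : NrnrNFAwtl Q α) (w : List α) : Prop :=
  ∃ q₀ ∈ A.I, ∃ x q w', Relation.ReflTransGen A.Step ([], q₀, w) (x, q, w') ∧
    (∀ y ∈ w', y ∈ A.τ q) ∧ q ∈ A.F

def lang (A : NrnrNFAwtl Q α) : Set (List α) := { w | A.Accepts w }

def Deterministic (A : NrnrNFAwtl Q α) : Prop :=
  (∃ q₀, A.I = {q₀}) ∧ ∀ q a, (A.δ q a).Subsingleton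

end NrnrNFAwtl

/-- Language classes. -/
def NFAwtlLangs (α : Type) [Fintype α] : Set (Set (List α)) :=
  { L | ∃ (Q : Type) (_ : Fintype Q) (A : NFAwtl Q α), A.lang = L }

def DFAwtlLangs (α : Type) [Fintype α] : Set (Set (List α)) :=
  { L | ∃ (Q : Type) (_ : Fintype Q) (A : NFAwtl Q α), A.Deterministic ∧ A.lang = L }

def RNFAwtlLangs (α : Type) [Fintype α] : Set (Set (List α)) :=
  { L | ∃ (Q : Type) (_ : Fintype Q) (A : RNFAwtl Q α), A.lang = L }

def RDFAwtlLangs (α : Type) [Fintype α] : Set (Set (List α)) :=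
  { L | ∃ (Q : Type) (_ : Fintype Q) (A : RNFAwtl Q α), A.Deterministic ∧ A.lang = L }

def NrNFAwtlLangs (α : Type) [Fintype α] : Set (Set (List α)) :=
  { L | ∃ (Q : Type) (_ : Fintype Q) (A : NrNFAwtl Q α), A.lang = L }

def NrDFAwtlLangs (α : Type) [Fintype α] : Set (Set (List α)) :=
  { L | ∃ (Q : Type) (_ : Fintype Q) (A : NrNFAwtl Q α), A.Deterministic ∧ A.lang = L }

def NrnrNFAwtlLangs (α : Type) [Fintype α] : Set (Set (List α)) :=
  { L | ∃ (Q : Type) (_ : Fintype Q) (A : NrnrNFAwtl Q α), A.lang = L }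

def NrnrDFAwtlLangs (α : Type) [Fintype α] : Set (Set (List α)) :=
  { L | ∃ (Q : Type) (_ : Fintype Q) (A : NrnrNFAwtl Q α), A.Deterministic ∧ A.lang = L }

/-- The three-letter alphabet {a, b, c}. -/
inductive Al : Type
  | a | b | c
deriving DecidableEq

instance instFintypeAl : Fintype Al :=
  ⟨{Al.a, Al.b, Al.c}, fun x => by cases x <;> simp⟩

/-- The language L_c = { w·c : w ∈ {a,b}*, |w|_a ≥ |w|_b }. -/
def Lc : Set (List Al) :=
  { u | ∃ w : List Al, Al.c ∉ w ∧ w.count Al.b ≤ w.count Al.a ∧ u = w ++ [Al.c] }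

namespace Impossibility

open List

/-! ### Generic list splitting lemmas -/

theorem eat {α : Type} {S : Set α} :
    ∀ (p : List α), (∀ y ∈ p, y ∈ S) → ∀ (t u v : List α) (a : α),
      p ++ t = u ++ a :: v → (∀ y ∈ u, y ∈ S) → a ∉ S →
      ∃ u', u = p ++ u' ∧ t = u' ++ a :: v
  | [], _, t, u, v, a, h, _, _ => ⟨u, rfl, by simpa using h⟩
  | x :: p, hp, t, u, v, a, h, hu, ha => by
    cases u with
    | nil =>
      simp only [List.cons_append, List.nil_append, List.cons.injEq] at h
      exact absurd (h.1 ▸ hp x (by simp)) ha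
    | cons y u =>
      simp only [List.cons_append, List.cons.injEq] at h
      obtain ⟨u', rfl, ht⟩ := eat p (fun z hz => hp z (by simp [hz])) t u v a h.2
        (fun z hz => hu z (by simp [hz])) ha
      exact ⟨u', by simp [h.1], ht⟩

theorem split_unique {α : Type} {S : Set α} {u₁ u₂ v₁ v₂ : List α} {a₁ a₂ : α}
    (h : u₁ ++ a₁ :: v₁ = u₂ ++ a₂ :: v₂)
    (hu₁ : ∀ y ∈ u₁, y ∈ S) (ha₁ : a₁ ∉ S)
    (hu₂ : ∀ y ∈ u₂, y ∈ S) (ha₂ : a₂ ∉ S) :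
    u₁ = u₂ ∧ a₁ = a₂ ∧ v₁ = v₂ := by
  obtain ⟨u', hu', ht⟩ := eat u₁ hu₁ (a₁ :: v₁) u₂ v₂ a₂ h hu₂ ha₂
  cases u' with
  | nil => simp only [List.append_nil] at hu'; simp only [List.nil_append, List.cons.injEq] at ht
           exact ⟨hu'.symm, ht.1, ht.2⟩
  | cons z u' =>
    exfalso
    have : z ∈ u₂ := by simp [hu']
    have hz : a₁ = z := by simpa using congrArg (fun l => l.head?) ht
    exact ha₁ (hz ▸ hu₂ z this)

end Impossibility

namespace Impossibility

open List

variable {Q α : Type} {A : RNFAwtl Q α}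

/-- A configuration is accepting. -/
def Acc (A : RNFAwtl Q α) (c : Q × List α) : Prop :=
  (∀ x ∈ c.2, x ∈ A.τ c.1) ∧ c.1 ∈ A.Facc

/-- Reachability. -/
def Reach (A : RNFAwtl Q α) : (Q × List α) → (Q × List α) → Prop :=
  Relation.ReflTransGen A.Step

/-- Reachability through non-accepting configurations (endpoint unconstrained). -/
inductive NAR (A : RNFAwtl Q α) : (Q × List α) → (Q × List α) → Prop
  | refl (c) : NAR A c c
  | head {c c' d} : A.Step c c' → ¬ Acc A c → NAR A c' d → NAR A c d

/-- Acceptance from a configuration. -/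
def AccFrom (A : RNFAwtl Q α) (c : Q × List α) : Prop :=
  ∃ d, Reach A c d ∧ Acc A d

theorem Reach.refl' {c : Q × List α} : Reach A c c := Relation.ReflTransGen.refl

theorem Reach.trans' {c d e : Q × List α} (h : Reach A c d) (h' : Reach A d e) :
    Reach A c e := Relation.ReflTransGen.trans h h'

theorem Reach.single {c d : Q × List α} (h : A.Step c d) : Reach A c d :=
  Relation.ReflTransGen.single h

theorem NAR.to_reach {c d : Q × List α} (h : NAR A c d) : Reach A c d := by
  induction h with
  | refl => exact Relation.ReflTransGen.refl
  | head hs _ _ ih => exact Relation.ReflTransGen.head hs ih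

theorem NAR.trans' {c d e : Q × List α} (h : NAR A c d) (h' : NAR A d e) : NAR A c e := by
  induction h with
  | refl => exact h'
  | head hs hna _ ih => exact NAR.head hs hna (ih h')

theorem AccFrom.of_acc {c : Q × List α} (h : Acc A c) : AccFrom A c :=
  ⟨c, Relation.ReflTransGen.refl, h⟩

/-! ### Step constructors and destructors -/

theorem step_letter_mk {q q' : Q} {u v : List α} {a : α}
    (hu : ∀ y ∈ u, y ∈ A.τ q) (ha : a ∉ A.τ q) (hq' : q' ∈ A.δ q a) :
    A.Step (q, u ++ a :: v) (q', u ++ v) :=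
  Or.inl ⟨u, a, v, rfl, hu, ha, hq', rfl⟩

theorem step_E_mk {q q' : Q} {t : List α}
    (ht : ∀ y ∈ t, y ∈ A.τ q) (hq' : q' ∈ A.δend q) :
    A.Step (q, t) (q', t) :=
  Or.inr ⟨ht, hq', rfl⟩

theorem transl_replicate {q : Q} {x : α} {n : ℕ} (h : ∀ y ∈ replicate n x, y ∈ A.τ q) (hn : n ≠ 0) :
    x ∈ A.τ q := h x (by simp [mem_replicate, hn])

theorem replicate_transl {q : Q} {x : α} {n : ℕ} (h : n = 0 ∨ x ∈ A.τ q) :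
    ∀ y ∈ replicate n x, y ∈ A.τ q := by
  intro y hy
  rw [mem_replicate] at hy
  rcases h with h | h
  · exact absurd h hy.1
  · exact hy.2 ▸ h

theorem step_lift {q q' : Q} {x : α} {n : ℕ} {t t' : List α}
    (hx : ∀ y ∈ replicate n x, y ∈ A.τ q) (h : A.Step (q, t) (q', t')) :
    A.Step (q, replicate n x ++ t) (q', replicate n x ++ t') := by
  rcases h with ⟨u, a, v, ht, hu, ha, hq', ht'⟩ | ⟨ht, hq', ht'⟩
  · simp only at ht ht'
    subst ht ht'
    have := step_letter_mk (A := A) (q := q) (q' := q') (u := replicate n x ++ u) (v := v) (a := a)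
      (by intro y hy; rcases mem_append.1 hy with hy | hy
          exacts [hx y hy, hu y hy]) ha hq'
    simpa [List.append_assoc] using this
  · simp only at ht ht'
    subst ht'
    exact step_E_mk (by intro y hy; rcases mem_append.1 hy with hy | hy
                        exacts [hx y hy, ht y hy]) hq'

theorem step_unlift {q q' : Q} {x : α} {n : ℕ} {t v : List α}
    (hx : ∀ y ∈ replicate n x, y ∈ A.τ q) (h : A.Step (q, replicate n x ++ t) (q', v)) :
    ∃ t', A.Step (q, t) (q', t') ∧ v = replicate n x ++ t' := by
  rcases h with ⟨u, a, w, ht, hu, ha, hq', hv⟩ | ⟨ht, hq', hv⟩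
  · simp only at ht hv
    obtain ⟨u', rfl, ht'⟩ := eat (S := A.τ q) (replicate n x) hx t u w a ht hu ha
    refine ⟨u' ++ w, ?_, by simp [hv, List.append_assoc]⟩
    exact ht' ▸ step_letter_mk (fun y hy => hu y (by simp [hy])) ha hq'
  · simp only at ht hv
    exact ⟨t, step_E_mk (fun y hy => ht y (by simp [hy])) hq', hv⟩

theorem step_head {q q' : Q} {x : α} {t v : List α}
    (hx : x ∉ A.τ q) (h : A.Step (q, x :: t) (q', v)) :
    q' ∈ A.δ q x ∧ v = t := by
  rcases h with ⟨u, a, w, ht, hu, ha, hq', hv⟩ | ⟨ht, _, _⟩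
  · simp only at ht hv
    cases u with
    | nil => simp only [List.nil_append, List.cons.injEq] at ht
             exact ⟨ht.1 ▸ hq', by simp [hv, ht.2]⟩
    | cons z u => exfalso
                  simp only [List.cons_append, List.cons.injEq] at ht
                  exact hx (ht.1 ▸ hu z (by simp))
  · exact absurd (ht x (by simp)) hx

theorem step_nil {q q' : Q} {v : List α} (h : A.Step (q, ([] : List α)) (q', v)) :
    q' ∈ A.δend q ∧ v = [] := by
  rcases h with ⟨u, a, w, ht, _, _, _, _⟩ | ⟨_, hq', hv⟩
  · exact absurd ht.symm (by simp)
  · exact ⟨hq', hv⟩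

/-! ### Determinism -/

theorem step_det (hδ : ∀ q a, (A.δ q a).Subsingleton) (hend : ∀ q, (A.δend q).Subsingleton)
    {c d d' : Q × List α} (h : A.Step c d) (h' : A.Step c d') : d = d' := by
  rcases h with ⟨u, a, v, ht, hu, ha, hq, hv⟩ | ⟨ht, hq, hv⟩
  · rcases h' with ⟨u', a', v', ht', hu', ha', hq', hv'⟩ | ⟨ht', _, _⟩
    · obtain ⟨rfl, rfl, rfl⟩ := split_unique (S := A.τ c.1) (ht ▸ ht') hu ha hu' ha'
      have : d.1 = d'.1 := hδ c.1 a hq hq'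
      exact Prod.ext this (by rw [hv, hv'])
    · exact absurd (ht' a (by simp [ht])) ha
  · rcases h' with ⟨u', a', v', ht', _, ha', _, _⟩ | ⟨_, hq', hv'⟩
    · exact absurd (ht a' (by simp [ht'])) ha'
    · exact Prod.ext (hend c.1 hq hq') (by rw [hv, hv'])

theorem push_step (hδ : ∀ q a, (A.δ q a).Subsingleton) (hend : ∀ q, (A.δend q).Subsingleton) {c d : Q × List α} (hacc : AccFrom A c) (hna : ¬ Acc A c)
    (h : A.Step c d) : AccFrom A d := by
  obtain ⟨e, hr, he⟩ := hacc
  rcases Relation.ReflTransGen.cases_head hr with rfl | ⟨c₁, h₁, hr₁⟩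
  · exact absurd he hna
  · exact step_det hδ hend h h₁ ▸ ⟨e, hr₁, he⟩

theorem push_nar (hδ : ∀ q a, (A.δ q a).Subsingleton) (hend : ∀ q, (A.δend q).Subsingleton) {c d : Q × List α} (hna : NAR A c d) (hacc : AccFrom A c) : AccFrom A d := by
  induction hna with
  | refl => exact hacc
  | head hs hn _ ih => exact ih (push_step hδ hend hacc hn hs)

theorem exists_step_of_accFrom {c : Q × List α} (hacc : AccFrom A c) (hna : ¬ Acc A c) :
    ∃ d, A.Step c d := by
  obtain ⟨e, hr, he⟩ := hacc
  rcases Relation.ReflTransGen.cases_head hr with rfl | ⟨c₁, h₁, _⟩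
  · exact absurd he hna
  · exact ⟨c₁, h₁⟩

theorem reach_dichotomy (hδ : ∀ q a, (A.δ q a).Subsingleton) (hend : ∀ q, (A.δend q).Subsingleton) {c d : Q × List α} (hacc : AccFrom A c) (hr : Reach A c d) :
    AccFrom A d ∨ ∃ e, Reach A c e ∧ Acc A e ∧ Reach A e d := by
  induction hr with
  | refl => exact Or.inl hacc
  | @tail b' c' hr hs ih =>
    rcases ih with ih | ⟨e, h₁, h₂, h₃⟩
    · by_cases hb : Acc A b'
      · exact Or.inr ⟨b', hr, hb, Reach.single hs⟩
      · exact Or.inl (push_step hδ hend ih hb hs)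
    · exact Or.inr ⟨e, h₁, h₂, Reach.trans' h₃ (Reach.single hs)⟩

/-! ### Counting -/

theorem step_count_le [DecidableEq α] {c d : Q × List α} (h : A.Step c d) (x : α) :
    d.2.count x ≤ c.2.count x := by
  rcases h with ⟨u, a, v, ht, _, _, _, hv⟩ | ⟨_, _, hv⟩
  · rw [ht, hv]
    simp only [List.count_append, List.count_cons]
    split <;> omega
  · rw [hv]

theorem reach_count_le [DecidableEq α] {c d : Q × List α} (h : Reach A c d) (x : α) :
    d.2.count x ≤ c.2.count x := by
  induction h with
  | refl => exact le_rfl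
  | tail _ hs ih => exact le_trans (step_count_le hs x) ih

end Impossibility

namespace Impossibility

open List

/-! ### Words of shape `a^i b^j ++ ts` -/

/-- The word `a^i b^j ts`. -/
def W (i j : ℕ) (ts : List Al) : List Al :=
  replicate i Al.a ++ (replicate j Al.b ++ ts)

theorem W_succ_a {i j : ℕ} {ts : List Al} : W (i+1) j ts = Al.a :: W i j ts := by
  simp [W, replicate_succ]

theorem W_succ_b {j : ℕ} {ts : List Al} : W 0 (j+1) ts = Al.b :: W 0 j ts := by
  simp [W, replicate_succ]

theorem W_zero_zero {ts : List Al} : W 0 0 ts = ts := by simp [W]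

theorem mem_W {x : Al} {i j : ℕ} {ts : List Al} :
    x ∈ W i j ts ↔ (i ≠ 0 ∧ x = Al.a) ∨ (j ≠ 0 ∧ x = Al.b) ∨ x ∈ ts := by
  simp [W, mem_append, mem_replicate]

theorem count_W (x : Al) (i j : ℕ) (ts : List Al) :
    (W i j ts).count x = (if Al.a = x then i else 0) + ((if Al.b = x then j else 0) + ts.count x) := by
  simp [W, List.count_append, List.count_replicate]

theorem transl_W {S : Set Al} {i j : ℕ} {ts : List Al} :
    (∀ y ∈ W i j ts, y ∈ S) ↔
      (i = 0 ∨ Al.a ∈ S) ∧ (j = 0 ∨ Al.b ∈ S) ∧ (∀ y ∈ ts, y ∈ S) := by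
  constructor
  · intro h
    refine ⟨?_, ?_, fun y hy => h y (mem_W.2 (Or.inr (Or.inr hy)))⟩
    · rcases Nat.eq_zero_or_pos i with hi | hi
      · exact Or.inl hi
      · exact Or.inr (h Al.a (mem_W.2 (Or.inl ⟨by omega, rfl⟩)))
    · rcases Nat.eq_zero_or_pos j with hj | hj
      · exact Or.inl hj
      · exact Or.inr (h Al.b (mem_W.2 (Or.inr (Or.inl ⟨by omega, rfl⟩))))
  · rintro ⟨ha, hb, hts⟩ y hy
    rcases mem_W.1 hy with ⟨hi, rfl⟩ | ⟨hj, rfl⟩ | hy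
    · exact ha.resolve_left hi
    · exact hb.resolve_left hj
    · exact hts y hy

/-! ### Membership in Lc -/

theorem W_c_assoc (i j : ℕ) : W i j [Al.c] = (replicate i Al.a ++ replicate j Al.b) ++ [Al.c] := by
  simp [W, List.append_assoc]

theorem mem_Lc {i j : ℕ} (h : j ≤ i) : W i j [Al.c] ∈ Lc := by
  refine ⟨replicate i Al.a ++ replicate j Al.b, ?_, ?_, (W_c_assoc i j)⟩
  · simp [mem_append, mem_replicate]
  · simp [List.count_append, List.count_replicate, h]

theorem not_mem_Lc_gt {i j : ℕ} (h : i < j) : W i j [Al.c] ∉ Lc := by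
  rintro ⟨w₀, hc, hcnt, heq⟩
  rw [W_c_assoc] at heq
  obtain ⟨rfl, -⟩ := List.append_inj' heq rfl
  simp [List.count_append, List.count_replicate] at hcnt
  omega

theorem not_mem_Lc_last {v : List Al} {x : Al} (hx : x ≠ Al.c) : v ++ [x] ∉ Lc := by
  rintro ⟨w₀, hc, hcnt, heq⟩
  have := List.getLast?_concat (l := v) (a := x)
  rw [heq, List.getLast?_concat] at this
  exact hx (by simpa using this.symm)

theorem W_cb_eq (i j : ℕ) : W i j [Al.c, Al.b] = W i j [Al.c] ++ [Al.b] := by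
  simp [W, List.append_assoc]

theorem W_ca_eq (i j : ℕ) : W i j [Al.c, Al.a] = W i j [Al.c] ++ [Al.a] := by
  simp [W, List.append_assoc]

theorem not_mem_Lc_cb (i j : ℕ) : W i j [Al.c, Al.b] ∉ Lc := by
  rw [W_cb_eq]; exact not_mem_Lc_last (by simp)

theorem not_mem_Lc_ca (i j : ℕ) : W i j [Al.c, Al.a] ∉ Lc := by
  rw [W_ca_eq]; exact not_mem_Lc_last (by simp)

/-! ### Steps on shaped words -/

variable {Q : Type} {A : RNFAwtl Q Al}

theorem stepW_a {q q' : Q} {i j : ℕ} {ts : List Al}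
    (ha : Al.a ∉ A.τ q) (hq' : q' ∈ A.δ q Al.a) :
    A.Step (q, W (i+1) j ts) (q', W i j ts) := by
  rw [W_succ_a]
  exact Or.inl ⟨[], Al.a, W i j ts, rfl, by simp, ha, hq', rfl⟩

theorem stepW_b {q q' : Q} {i j : ℕ} {ts : List Al}
    (ha : i = 0 ∨ Al.a ∈ A.τ q) (hb : Al.b ∉ A.τ q) (hq' : q' ∈ A.δ q Al.b) :
    A.Step (q, W i (j+1) ts) (q', W i j ts) := by
  unfold W
  refine step_lift (replicate_transl ha) ?_
  rw [replicate_succ]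
  exact Or.inl ⟨[], Al.b, replicate j Al.b ++ ts, rfl, by simp, hb, hq', rfl⟩

theorem stepW_c {q q' : Q} {i j : ℕ} {ts : List Al}
    (ha : i = 0 ∨ Al.a ∈ A.τ q) (hb : j = 0 ∨ Al.b ∈ A.τ q) (hc : Al.c ∉ A.τ q)
    (hq' : q' ∈ A.δ q Al.c) :
    A.Step (q, W i j (Al.c :: ts)) (q', W i j ts) := by
  unfold W
  refine step_lift (replicate_transl ha) (step_lift (replicate_transl hb) ?_)
  exact Or.inl ⟨[], Al.c, ts, rfl, by simp, hc, hq', rfl⟩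

theorem stepW_E {q q' : Q} {i j : ℕ} {ts : List Al}
    (ha : i = 0 ∨ Al.a ∈ A.τ q) (hb : j = 0 ∨ Al.b ∈ A.τ q) (hts : ∀ y ∈ ts, y ∈ A.τ q)
    (hq' : q' ∈ A.δend q) :
    A.Step (q, W i j ts) (q', W i j ts) :=
  step_E_mk (transl_W.2 ⟨ha, hb, hts⟩) hq'

end Impossibility

namespace Impossibility

open List

variable {Q : Type} {A : RNFAwtl Q Al}

/-- Destructor for steps from a canonical configuration `a^i b^j c`. -/
theorem stepW_dest {q p : Q} {v : List Al} {i j : ℕ}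
    (h : A.Step (q, W i j [Al.c]) (p, v)) :
      (∃ i', i = i' + 1 ∧ Al.a ∉ A.τ q ∧ p ∈ A.δ q Al.a ∧ v = W i' j [Al.c])
    ∨ (∃ j', j = j' + 1 ∧ (i = 0 ∨ Al.a ∈ A.τ q) ∧ Al.b ∉ A.τ q ∧ p ∈ A.δ q Al.b ∧
        v = W i j' [Al.c])
    ∨ ((i = 0 ∨ Al.a ∈ A.τ q) ∧ (j = 0 ∨ Al.b ∈ A.τ q) ∧ Al.c ∉ A.τ q ∧ p ∈ A.δ q Al.c ∧
        v = W i j [])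
    ∨ ((i = 0 ∨ Al.a ∈ A.τ q) ∧ (j = 0 ∨ Al.b ∈ A.τ q) ∧ Al.c ∈ A.τ q ∧ p ∈ A.δend q ∧
        v = W i j [Al.c]) := by
  by_cases hia : i = 0 ∨ Al.a ∈ A.τ q
  · have h' : A.Step (q, replicate i Al.a ++ (replicate j Al.b ++ [Al.c])) (p, v) := h
    obtain ⟨t', h1, rfl⟩ := step_unlift (replicate_transl hia) h'
    by_cases hib : j = 0 ∨ Al.b ∈ A.τ q
    · obtain ⟨t'', h2, rfl⟩ := step_unlift (replicate_transl hib) h1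
      by_cases hic : Al.c ∈ A.τ q
      · have h2' : A.Step (q, replicate 1 Al.c ++ []) (p, t'') := by simpa using h2
        obtain ⟨t3, h3, rfl⟩ := step_unlift (replicate_transl (Or.inr hic)) h2'
        obtain ⟨hp, rfl⟩ := step_nil h3
        exact Or.inr (Or.inr (Or.inr ⟨hia, hib, hic, hp, by simp [W]⟩))
      · obtain ⟨hp, rfl⟩ := step_head hic h2
        exact Or.inr (Or.inr (Or.inl ⟨hia, hib, hic, hp, rfl⟩))
    · push_neg at hib
      obtain ⟨j', rfl⟩ := Nat.exists_eq_succ_of_ne_zero hib.1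
      rw [replicate_succ] at h1
      obtain ⟨hp, rfl⟩ := step_head hib.2 h1
      exact Or.inr (Or.inl ⟨j', rfl, hia, hib.2, hp, rfl⟩)
  · push_neg at hia
    obtain ⟨i', rfl⟩ := Nat.exists_eq_succ_of_ne_zero hia.1
    rw [W_succ_a] at h
    obtain ⟨hp, rfl⟩ := step_head hia.2 h
    exact Or.inl ⟨i', rfl, hia.2, hp, rfl⟩

theorem W_inj₁ {i j i' j' : ℕ} {ts : List Al} (h : W i j ts = W i' j' ts) : i = i' ∧ j = j' := by
  constructor
  · have := congrArg (fun l => List.count Al.a l) h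
    simpa [count_W] using this
  · have := congrArg (fun l => List.count Al.b l) h
    simpa [count_W] using this

theorem countb_W (i j : ℕ) : (W i j [Al.c]).count Al.b = j := by simp [count_W]
theorem counta_W (i j : ℕ) : (W i j [Al.c]).count Al.a = i := by simp [count_W]
theorem countc_W (i j : ℕ) : (W i j [Al.c]).count Al.c = 1 := by simp [count_W]

theorem acc_W_cb {q : Q} {i j' : ℕ} (h : Acc A (q, W i (j'+1) [Al.c])) :
    Acc A (q, W i j' [Al.c, Al.b]) := by
  obtain ⟨ht, hf⟩ := h
  rw [transl_W] at ht
  obtain ⟨ha, hb, hc⟩ := ht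
  have hb' : Al.b ∈ A.τ q := hb.resolve_left (by omega)
  refine ⟨transl_W.2 ⟨ha, Or.inr hb', ?_⟩, hf⟩
  intro y hy
  simp only [List.mem_cons, List.not_mem_nil, or_false, List.mem_singleton] at hy
  rcases hy with rfl | rfl
  · exact hc Al.c (by simp)
  · exact hb'

theorem acc_W_ca {q : Q} {i' : ℕ} (h : Acc A (q, W (i'+1) 0 [Al.c])) :
    Acc A (q, W i' 0 [Al.c, Al.a]) := by
  obtain ⟨ht, hf⟩ := h
  rw [transl_W] at ht
  obtain ⟨ha, _, hc⟩ := ht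
  have ha' : Al.a ∈ A.τ q := ha.resolve_left (by omega)
  refine ⟨transl_W.2 ⟨Or.inr ha', Or.inl rfl, ?_⟩, hf⟩
  intro y hy
  simp only [List.mem_cons, List.not_mem_nil, or_false, List.mem_singleton] at hy
  rcases hy with rfl | rfl
  · exact hc Al.c (by simp)
  · exact ha'

end Impossibility

namespace Impossibility

open List

/-- A putative deterministic RNFAwtl accepting Lc. -/
structure Ctx (Q : Type) where
  A : RNFAwtl Q Al
  q₀ : Q
  hI : A.I = {q₀}
  hδ : ∀ q a, (A.δ q a).Subsingleton
  hend : ∀ q, (A.δend q).Subsingleton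
  hlang : A.lang = Lc

namespace Ctx

variable {Q : Type} (C : Ctx Q)

theorem accFrom_iff (u : List Al) : AccFrom C.A (C.q₀, u) ↔ u ∈ Lc := by
  have : C.A.Accepts u ↔ AccFrom C.A (C.q₀, u) := by
    constructor
    · rintro ⟨q0, hq0, q, w', hr, ht, hf⟩
      rw [C.hI, Set.mem_singleton_iff] at hq0
      exact ⟨(q, w'), hq0 ▸ hr, ht, hf⟩
    · rintro ⟨⟨q, w'⟩, hr, ht, hf⟩
      exact ⟨C.q₀, by rw [C.hI]; rfl, q, w', hr, ht, hf⟩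
  rw [← this]
  have : u ∈ C.A.lang ↔ u ∈ Lc := by rw [C.hlang]
  exact this

theorem accW {i j : ℕ} (h : j ≤ i) : AccFrom C.A (C.q₀, W i j [Al.c]) :=
  (C.accFrom_iff _).2 (mem_Lc h)

theorem rejW {i j : ℕ} (h : i < j) (hacc : AccFrom C.A (C.q₀, W i j [Al.c])) : False :=
  not_mem_Lc_gt h ((C.accFrom_iff _).1 hacc)

theorem rej_cb {i j : ℕ} (hacc : AccFrom C.A (C.q₀, W i j [Al.c, Al.b])) : False :=
  not_mem_Lc_cb i j ((C.accFrom_iff _).1 hacc)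

theorem rej_ca {i j : ℕ} (hacc : AccFrom C.A (C.q₀, W i j [Al.c, Al.a])) : False :=
  not_mem_Lc_ca i j ((C.accFrom_iff _).1 hacc)

theorem accFrom_mono {c d : Q × List Al} (h : Reach C.A c d) (hacc : AccFrom C.A d) :
    AccFrom C.A c := by
  obtain ⟨e, hr, he⟩ := hacc
  exact ⟨e, Reach.trans' h hr, he⟩

/-! ### The `b`-side invariant -/

/-- Simulation invariant between runs on `a^n b^(m+1) c` and on `a^n b^m c b`. -/
theorem lemB {n m : ℕ} {d : Q × List Al}
    (h : Reach C.A (C.q₀, W n (m+1) [Al.c]) d) :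
      (∃ i j', d.2 = W i (j'+1) [Al.c] ∧
        Reach C.A (C.q₀, W n m [Al.c, Al.b]) (d.1, W i j' [Al.c, Al.b]))
    ∨ d.2.count Al.b = 0 ∨ Al.c ∉ d.2 := by
  induction h with
  | refl => exact Or.inl ⟨n, m, rfl, Relation.ReflTransGen.refl⟩
  | @tail c' d' hr hs ih =>
    obtain ⟨q₁, v₁⟩ := c'
    obtain ⟨q₂, v₂⟩ := d'
    simp only at ih ⊢
    rcases ih with ⟨i, j', hv₁, hpart⟩ | hcnt | hcm
    · subst hv₁
      rcases stepW_dest hs with ⟨i', rfl, ha, hp, rfl⟩ | ⟨j₂, hj₂, hia, hb, hp, rfl⟩ |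
        ⟨hia, hib, hc, hp, rfl⟩ | ⟨hia, hib, hc, hp, rfl⟩
      · -- a-deletion
        refine Or.inl ⟨i', j', rfl, Reach.trans' hpart (Reach.single ?_)⟩
        exact stepW_a ha hp
      · -- b-deletion
        have hj : j' = j₂ := by omega
        subst hj
        cases j' with
        | zero => exact Or.inr (Or.inl (by simp [count_W]))
        | succ j'' =>
          refine Or.inl ⟨i, j'', rfl, Reach.trans' hpart (Reach.single ?_)⟩
          exact stepW_b hia hb hp
      · -- c-deletion
        refine Or.inr (Or.inr ?_)
        simp [mem_W]
      · -- E-step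
        have hb : Al.b ∈ C.A.τ q₁ := hib.resolve_left (by omega)
        refine Or.inl ⟨i, j', rfl, Reach.trans' hpart (Reach.single ?_)⟩
        refine stepW_E hia (Or.inr hb) ?_ hp
        intro y hy
        simp only [List.mem_cons, List.not_mem_nil, or_false, List.mem_singleton] at hy
        rcases hy with rfl | rfl
        · exact hc
        · exact hb
    · refine Or.inr (Or.inl ?_)
      have h1 := step_count_le hs Al.b
      simp only at h1
      omega
    · refine Or.inr (Or.inr ?_)
      intro hmem
      have h1 := step_count_le hs Al.c
      simp only at h1
      have h2 : v₁.count Al.c = 0 := List.count_eq_zero.2 hcm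
      have h3 : v₂.count Al.c = 0 := by omega
      exact List.count_eq_zero.1 h3 hmem

/-! ### The `a`-side invariant -/

/-- Simulation invariant between runs on `a^(n+1) c` and on `a^n c a`. -/
theorem lemA {n : ℕ} {d : Q × List Al}
    (h : Reach C.A (C.q₀, W (n+1) 0 [Al.c]) d) :
      (∃ i', d.2 = W (i'+1) 0 [Al.c] ∧
        Reach C.A (C.q₀, W n 0 [Al.c, Al.a]) (d.1, W i' 0 [Al.c, Al.a]))
    ∨ d.2.count Al.a = 0 ∨ Al.c ∉ d.2 := by
  induction h with
  | refl => exact Or.inl ⟨n, rfl, Relation.ReflTransGen.refl⟩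
  | @tail c' d' hr hs ih =>
    obtain ⟨q₁, v₁⟩ := c'
    obtain ⟨q₂, v₂⟩ := d'
    simp only at ih ⊢
    rcases ih with ⟨i', hv₁, hpart⟩ | hcnt | hcm
    · subst hv₁
      rcases stepW_dest hs with ⟨i₂, hi₂, ha, hp, rfl⟩ | ⟨j₂, hj₂, hia, hb, hp, rfl⟩ |
        ⟨hia, hib, hic, hp, rfl⟩ | ⟨hia, hib, hic, hp, rfl⟩
      · -- a-deletion
        have hi : i' = i₂ := by omega
        subst hi
        cases i' with
        | zero => exact Or.inr (Or.inl (by simp [count_W]))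
        | succ i'' =>
          refine Or.inl ⟨i'', rfl, Reach.trans' hpart (Reach.single ?_)⟩
          exact stepW_a ha hp
      · -- b-deletion : impossible
        exact absurd hj₂ (by omega)
      · -- c-deletion
        refine Or.inr (Or.inr ?_)
        simp [mem_W]
      · -- E-step
        have ha' : Al.a ∈ C.A.τ q₁ := hia.resolve_left (by omega)
        refine Or.inl ⟨i', rfl, Reach.trans' hpart (Reach.single ?_)⟩
        refine stepW_E (Or.inr ha') (Or.inl rfl) ?_ hp
        intro y hy
        simp only [List.mem_cons, List.not_mem_nil, or_false, List.mem_singleton] at hy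
        rcases hy with rfl | rfl
        · exact hic
        · exact ha'
    · refine Or.inr (Or.inl ?_)
      have h1 := step_count_le hs Al.a
      simp only at h1
      omega
    · refine Or.inr (Or.inr ?_)
      intro hmem
      have h1 := step_count_le hs Al.c
      simp only at h1
      have h2 : v₁.count Al.c = 0 := List.count_eq_zero.2 hcm
      have h3 : v₂.count Al.c = 0 := by omega
      exact List.count_eq_zero.1 h3 hmem

/-! ### Forbidden events -/

/-- B1: no accepting configuration with `b`s remaining. -/
theorem B1 {n m : ℕ} {q : Q} {i j : ℕ}
    (h : Reach C.A (C.q₀, W n (m+1) [Al.c]) (q, W i (j+1) [Al.c])) :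
    ¬ Acc C.A (q, W i (j+1) [Al.c]) := by
  intro hAcc
  rcases C.lemB h with ⟨i', j', heq, hpart⟩ | hcnt | hcm
  · simp only at heq
    obtain ⟨hi, hj⟩ := W_inj₁ heq
    subst hi
    have hj' : j = j' := by omega
    subst hj'
    exact C.rej_cb ⟨_, hpart, acc_W_cb hAcc⟩
  · simp [countb_W] at hcnt
  · simp [mem_W] at hcm

/-- A1: no accepting configuration with `a`s remaining (pure a-c words). -/
theorem A1 {n : ℕ} {q : Q} {i : ℕ}
    (h : Reach C.A (C.q₀, W (n+1) 0 [Al.c]) (q, W (i+1) 0 [Al.c])) :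
    ¬ Acc C.A (q, W (i+1) 0 [Al.c]) := by
  intro hAcc
  rcases C.lemA h with ⟨i', heq, hpart⟩ | hcnt | hcm
  · simp only at heq
    obtain ⟨hi, -⟩ := W_inj₁ heq
    have : i = i' := by omega
    subst this
    exact C.rej_ca ⟨_, hpart, acc_W_ca hAcc⟩
  · simp [counta_W] at hcnt
  · simp [mem_W] at hcm

/-- B2: a state about to delete the last `b` cannot have `c` translucent. -/
theorem B2 {n m i : ℕ} {q : Q} (hmn : m + 1 ≤ n)
    (h : Reach C.A (C.q₀, W n (m+1) [Al.c]) (q, W i 1 [Al.c]))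
    (hia : i = 0 ∨ Al.a ∈ C.A.τ q) (hb : Al.b ∉ C.A.τ q) (hc : Al.c ∈ C.A.τ q) : False := by
  have hacc0 : AccFrom C.A (C.q₀, W n (m+1) [Al.c]) := C.accW hmn
  rcases reach_dichotomy C.hδ C.hend hacc0 h with hacc | ⟨e, he1, he2, he3⟩
  · have hnacc : ¬ Acc C.A (q, W i 1 [Al.c]) := fun hA =>
      hb (hA.1 Al.b (mem_W.2 (Or.inr (Or.inl ⟨one_ne_zero, rfl⟩))))
    obtain ⟨⟨p, v⟩, hd⟩ := exists_step_of_accFrom hacc hnacc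
    rcases stepW_dest hd with ⟨i', hi', ha, hp, rfl⟩ | ⟨j', hj', hia', hb', hp, rfl⟩ |
      ⟨_, _, hc', _, _⟩ | ⟨_, hib, _, _, _⟩
    · exact ha (hia.resolve_left (by omega))
    · have hj0 : j' = 0 := by omega
      subst hj0
      have haccp : AccFrom C.A (p, W i 0 [Al.c]) := push_step C.hδ C.hend hacc hnacc hd
      rcases C.lemB h with ⟨i₂, j₂, heq, hpart⟩ | hcnt | hcm
      · simp only at heq
        obtain ⟨hi, hj⟩ := W_inj₁ heq
        have hj2 : j₂ = 0 := by omega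
        subst hi; subst hj2
        have hu : ∀ y ∈ replicate i Al.a ++ [Al.c], y ∈ C.A.τ q := by
          intro y hy
          rcases List.mem_append.1 hy with hy | hy
          · exact replicate_transl hia y hy
          · simp only [List.mem_singleton] at hy; exact hy ▸ hc
        have hstep : C.A.Step (q, W i 0 [Al.c, Al.b]) (p, W i 0 [Al.c]) := by
          have h1 : W i 0 [Al.c, Al.b] = (replicate i Al.a ++ [Al.c]) ++ Al.b :: [] := by
            simp [W]
          have h2 := step_letter_mk (A := C.A) (q := q) (q' := p)
            (u := replicate i Al.a ++ [Al.c]) (v := []) hu hb hp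
          rw [h1]
          simpa [W] using h2
        exact C.rej_cb (C.accFrom_mono (Reach.trans' hpart (Reach.single hstep)) haccp)
      · simp [countb_W] at hcnt
      · simp [mem_W] at hcm
    · exact hc' hc
    · exact hb (hib.resolve_left (by omega))
  · obtain ⟨qe, ve⟩ := e
    rcases C.lemB he1 with ⟨i₂, j₂, heq, hpart⟩ | hcnt | hcm
    · simp only at heq hpart
      rw [heq] at he2
      exact C.rej_cb ⟨_, hpart, acc_W_cb he2⟩
    · have h1 := reach_count_le he3 Al.b
      simp only [countb_W] at h1 hcnt
      omega
    · have h1 := reach_count_le he3 Al.c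
      simp only [countc_W] at h1
      have h2 : ve.count Al.c = 0 := List.count_eq_zero.2 hcm
      omega

/-- B3: a state that deletes `c` cannot have `b`s remaining. -/
theorem B3 {n m i j : ℕ} {q : Q} (hmn : m + 1 ≤ n)
    (h : Reach C.A (C.q₀, W n (m+1) [Al.c]) (q, W i (j+1) [Al.c]))
    (hia : i = 0 ∨ Al.a ∈ C.A.τ q) (hb : Al.b ∈ C.A.τ q) (hc : Al.c ∉ C.A.τ q) : False := by
  have hacc0 : AccFrom C.A (C.q₀, W n (m+1) [Al.c]) := C.accW hmn
  rcases reach_dichotomy C.hδ C.hend hacc0 h with hacc | ⟨e, he1, he2, he3⟩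
  · have hnacc : ¬ Acc C.A (q, W i (j+1) [Al.c]) := fun hA =>
      hc (hA.1 Al.c (mem_W.2 (Or.inr (Or.inr (by simp)))))
    obtain ⟨⟨p, v⟩, hd⟩ := exists_step_of_accFrom hacc hnacc
    rcases stepW_dest hd with ⟨i', hi', ha, hp, rfl⟩ | ⟨j', hj', hia', hb', hp, rfl⟩ |
      ⟨hia', hib', hc', hp, rfl⟩ | ⟨_, _, hic, _, _⟩
    · exact ha (hia.resolve_left (by omega))
    · exact hb' hb
    · have haccp : AccFrom C.A (p, W i (j+1) []) := push_step C.hδ C.hend hacc hnacc hd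
      rcases C.lemB h with ⟨i₂, j₂, heq, hpart⟩ | hcnt | hcm
      · simp only at heq
        obtain ⟨hi, hj⟩ := W_inj₁ heq
        have hj2 : j₂ = j := by omega
        rw [← hi, hj2] at hpart
        have hu : ∀ y ∈ replicate i Al.a ++ replicate j Al.b, y ∈ C.A.τ q := by
          intro y hy
          rcases List.mem_append.1 hy with hy | hy
          · exact replicate_transl hia y hy
          · rw [List.mem_replicate] at hy; exact hy.2 ▸ hb
        have hstep : C.A.Step (q, W i j [Al.c, Al.b]) (p, W i (j+1) []) := by
          have h1 : W i j [Al.c, Al.b] =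
              (replicate i Al.a ++ replicate j Al.b) ++ Al.c :: [Al.b] := by
            simp [W]
          have h2 := step_letter_mk (A := C.A) (q := q) (q' := p)
            (u := replicate i Al.a ++ replicate j Al.b) (v := [Al.b]) hu hc hp
          rw [h1]
          have h3 : (replicate i Al.a ++ replicate j Al.b) ++ [Al.b] = W i (j+1) [] := by
            simp [W, List.replicate_succ']
          rw [← h3]
          exact h2
        exact C.rej_cb (C.accFrom_mono (Reach.trans' hpart (Reach.single hstep)) haccp)
      · simp [countb_W] at hcnt
      · simp [mem_W] at hcm
    · exact hc hic
  · obtain ⟨qe, ve⟩ := e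
    rcases C.lemB he1 with ⟨i₂, j₂, heq, hpart⟩ | hcnt | hcm
    · simp only at heq hpart
      rw [heq] at he2
      exact C.rej_cb ⟨_, hpart, acc_W_cb he2⟩
    · have h1 := reach_count_le he3 Al.b
      simp only [countb_W] at h1 hcnt
      omega
    · have h1 := reach_count_le he3 Al.c
      simp only [countc_W] at h1
      have h2 : ve.count Al.c = 0 := List.count_eq_zero.2 hcm
      omega

/-- A2: a state that deletes `c` cannot have `a`s remaining. -/
theorem A2 {n i : ℕ} {q : Q}
    (h : Reach C.A (C.q₀, W (n+1) 0 [Al.c]) (q, W (i+1) 0 [Al.c]))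
    (ha : Al.a ∈ C.A.τ q) (hc : Al.c ∉ C.A.τ q) : False := by
  have hacc0 : AccFrom C.A (C.q₀, W (n+1) 0 [Al.c]) := C.accW (by omega)
  rcases reach_dichotomy C.hδ C.hend hacc0 h with hacc | ⟨e, he1, he2, he3⟩
  · have hnacc : ¬ Acc C.A (q, W (i+1) 0 [Al.c]) := fun hA =>
      hc (hA.1 Al.c (mem_W.2 (Or.inr (Or.inr (by simp)))))
    obtain ⟨⟨p, v⟩, hd⟩ := exists_step_of_accFrom hacc hnacc
    rcases stepW_dest hd with ⟨i', hi', ha', hp, rfl⟩ | ⟨j', hj', _, _, _, _⟩ |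
      ⟨hia', hib', hc', hp, rfl⟩ | ⟨_, _, hic, _, _⟩
    · exact ha' ha
    · exact absurd hj' (by omega)
    · have haccp : AccFrom C.A (p, W (i+1) 0 []) := push_step C.hδ C.hend hacc hnacc hd
      rcases C.lemA h with ⟨i₂, heq, hpart⟩ | hcnt | hcm
      · simp only at heq
        obtain ⟨hi, -⟩ := W_inj₁ heq
        have hi2 : i₂ = i := by omega
        rw [hi2] at hpart
        have hstep : C.A.Step (q, W i 0 [Al.c, Al.a]) (p, W (i+1) 0 []) := by
          have h1 : W i 0 [Al.c, Al.a] = replicate i Al.a ++ Al.c :: [Al.a] := by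
            simp [W]
          have h2 := step_letter_mk (A := C.A) (q := q) (q' := p)
            (u := replicate i Al.a) (v := [Al.a]) (replicate_transl (Or.inr ha)) hc hp
          rw [h1]
          have h3 : replicate i Al.a ++ [Al.a] = W (i+1) 0 [] := by
            simp [W, List.replicate_succ']
          rw [← h3]
          exact h2
        exact C.rej_ca (C.accFrom_mono (Reach.trans' hpart (Reach.single hstep)) haccp)
      · simp [counta_W] at hcnt
      · simp [mem_W] at hcm
    · exact hc hic
  · obtain ⟨qe, ve⟩ := e
    rcases C.lemA he1 with ⟨i₂, heq, hpart⟩ | hcnt | hcm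
    · simp only at heq hpart
      rw [heq] at he2
      exact C.rej_ca ⟨_, hpart, acc_W_ca he2⟩
    · have h1 := reach_count_le he3 Al.a
      simp only [counta_W] at h1
      simp only at hcnt
      omega
    · have h1 := reach_count_le he3 Al.c
      simp only [countc_W] at h1
      have h2 : ve.count Al.c = 0 := List.count_eq_zero.2 hcm
      omega

end Ctx

end Impossibility

namespace Impossibility

open List

theorem NAR.tail' {Q α : Type} {A : RNFAwtl Q α} {c d e : Q × List α}
    (h : NAR A c d) (hna : ¬ Acc A d) (hs : A.Step d e) : NAR A c e :=
  NAR.trans' h (NAR.head hs hna (NAR.refl e))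

namespace Ctx

variable {Q : Type} (C : Ctx Q)

theorem notAcc_b {q : Q} {i j : ℕ} {ts : List Al} (hb : Al.b ∉ C.A.τ q) :
    ¬ Acc C.A (q, W i (j+1) ts) := fun hA =>
  hb (hA.1 Al.b (mem_W.2 (Or.inr (Or.inl ⟨by omega, rfl⟩))))

theorem notAcc_c {q : Q} {i j : ℕ} (hc : Al.c ∉ C.A.τ q) :
    ¬ Acc C.A (q, W i j [Al.c]) := fun hA =>
  hc (hA.1 Al.c (mem_W.2 (Or.inr (Or.inr (by simp)))))

theorem notAcc_fin {q : Q} {w : List Al} (hf : q ∉ C.A.Facc) : ¬ Acc C.A (q, w) :=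
  fun hA => hf hA.2

/-- The chain walk: from a configuration `(z, [c])` that accepts, walk the
(deterministic) E-chain to the first state `y` with `c` non-translucent. -/
theorem chain {N r : ℕ} (hrN : r + 1 ≤ N) {z : Q}
    (haz : AccFrom C.A (z, [Al.c]))
    (hlz : ∀ j, Reach C.A (C.q₀, W N (r+j) [Al.c]) (z, W 0 j [Al.c])) :
    ∃ y, Al.c ∉ C.A.τ y ∧ Al.b ∉ C.A.τ y ∧ AccFrom C.A (y, [Al.c]) ∧
      (∀ j, Reach C.A (z, W 0 j [Al.c]) (y, W 0 j [Al.c])) ∧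
      (∀ j, NAR C.A (z, W 0 j [Al.c]) (y, W 0 j [Al.c])) := by
  obtain ⟨fin, hpath, hfin⟩ := haz
  -- we generalize over the start of the path
  revert hlz
  refine Relation.ReflTransGen.head_induction_on (b := fin)
    (motive := fun c₁ _ => ∀ (x : Q), c₁ = (x, [Al.c]) →
      (∀ j, Reach C.A (C.q₀, W N (r+j) [Al.c]) (x, W 0 j [Al.c])) →
      ∃ y, Al.c ∉ C.A.τ y ∧ Al.b ∉ C.A.τ y ∧ AccFrom C.A (y, [Al.c]) ∧
        (∀ j, Reach C.A (x, W 0 j [Al.c]) (y, W 0 j [Al.c])) ∧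
        (∀ j, NAR C.A (x, W 0 j [Al.c]) (y, W 0 j [Al.c])))
    hpath ?_ ?_ z rfl
  · -- refl case : (x, [c]) is accepting
    rintro x rfl hlx
    exfalso
    have hcx : Al.c ∈ C.A.τ x := hfin.1 Al.c (by simp)
    by_cases hbx : Al.b ∈ C.A.τ x
    · have hacc1 : Acc C.A (x, W 0 (0+1) [Al.c]) :=
        ⟨transl_W.2 ⟨Or.inl rfl, Or.inr hbx, by
          intro y hy; simp only [List.mem_singleton] at hy; exact hy ▸ hcx⟩, hfin.2⟩
      exact C.B1 (n := N) (m := r) (i := 0) (j := 0) (hlx 1) hacc1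
    · exact C.B2 (n := N) (m := r) (i := 0) hrN (hlx 1) (Or.inl rfl) hbx hcx
  · -- head case
    rintro c₁ c₂ hs hrest ih x rfl hlx
    by_cases hcx : Al.c ∈ C.A.τ x
    · -- E-step; first force b translucent and x not accepting
      have hbx : Al.b ∈ C.A.τ x := by
        by_contra hbx
        exact C.B2 (n := N) (m := r) (i := 0) hrN (hlx 1) (Or.inl rfl) hbx hcx
      have hxf : x ∉ C.A.Facc := by
        intro hxf
        have hacc1 : Acc C.A (x, W 0 (0+1) [Al.c]) :=
          ⟨transl_W.2 ⟨Or.inl rfl, Or.inr hbx, by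
            intro y hy; simp only [List.mem_singleton] at hy; exact hy ▸ hcx⟩, hxf⟩
        exact C.B1 (n := N) (m := r) (i := 0) (j := 0) (hlx 1) hacc1
      obtain ⟨p, v⟩ := c₂
      have hs' : C.A.Step (x, W 0 0 [Al.c]) (p, v) := by
        simpa [W_zero_zero] using hs
      rcases stepW_dest hs' with ⟨i', hi', _⟩ | ⟨j', hj', _⟩ | ⟨_, _, hc', _, _⟩ |
        ⟨_, _, _, hp, hv⟩
      · omega
      · omega
      · exact absurd hcx hc'
      · -- v = W 0 0 [c] = [c]
        have hv' : v = [Al.c] := by simpa [W_zero_zero] using hv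
        subst hv'
        have hstepj : ∀ j, C.A.Step (x, W 0 j [Al.c]) (p, W 0 j [Al.c]) := by
          intro j
          refine stepW_E (Or.inl rfl) (Or.inr hbx) ?_ hp
          intro y hy; simp only [List.mem_singleton] at hy; exact hy ▸ hcx
        obtain ⟨y, hyc, hyb, hyacc, hyreach, hynar⟩ := ih p rfl
          (fun j => Reach.trans' (hlx j) (Reach.single (hstepj j)))
        refine ⟨y, hyc, hyb, hyacc, ?_, ?_⟩
        · exact fun j => Reach.trans' (Reach.single (hstepj j)) (hyreach j)
        · exact fun j => NAR.head (hstepj j) (C.notAcc_fin hxf) (hynar j)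
    · -- found y := x
      have hbx : Al.b ∉ C.A.τ x := by
        intro hbx
        exact C.B3 (n := N) (m := r) (i := 0) (j := 0) hrN (hlx 1) (Or.inl rfl) hbx hcx
      refine ⟨x, hcx, hbx, ⟨fin, Relation.ReflTransGen.head hs hrest, hfin⟩, ?_, ?_⟩
      · exact fun j => Relation.ReflTransGen.refl
      · exact fun j => NAR.refl _
end Ctx

end Impossibility

namespace Impossibility

namespace Ctx

open List

variable {Q : Type} (C : Ctx Q)

/-- The base round: processing `a^(K+1) b^j c`, the run first deletes all `a`s
and then E-chains to the first `c`-opaque state `y₀`. -/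
theorem base (K : ℕ) :
    ∃ y, Al.c ∉ C.A.τ y ∧ Al.b ∉ C.A.τ y ∧ AccFrom C.A (y, [Al.c]) ∧
      (∀ j, Reach C.A (C.q₀, W (K+1) j [Al.c]) (y, W 0 j [Al.c])) ∧
      (∀ j, j ≤ K+1 → NAR C.A (C.q₀, W (K+1) j [Al.c]) (y, W 0 j [Al.c])) := by
  obtain ⟨fin, hpath, hfin⟩ := C.accW (show 0 ≤ K+1 by omega)
  revert hpath
  have main : ∀ (c₁ : Q × List Al), Reach C.A c₁ fin →
      ∀ (i : ℕ) (x : Q), c₁ = (x, W i 0 [Al.c]) →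
      (∀ j, Reach C.A (C.q₀, W (K+1) j [Al.c]) (x, W i j [Al.c])) →
      (∀ j, j ≤ K+1 → NAR C.A (C.q₀, W (K+1) j [Al.c]) (x, W i j [Al.c])) →
      ∃ y, Al.c ∉ C.A.τ y ∧ Al.b ∉ C.A.τ y ∧ AccFrom C.A (y, [Al.c]) ∧
        (∀ j, Reach C.A (C.q₀, W (K+1) j [Al.c]) (y, W 0 j [Al.c])) ∧
        (∀ j, j ≤ K+1 → NAR C.A (C.q₀, W (K+1) j [Al.c]) (y, W 0 j [Al.c])) := by
    intro c₁ hpath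
    refine Relation.ReflTransGen.head_induction_on (b := fin)
      (motive := fun c₁ _ => ∀ (i : ℕ) (x : Q), c₁ = (x, W i 0 [Al.c]) →
        (∀ j, Reach C.A (C.q₀, W (K+1) j [Al.c]) (x, W i j [Al.c])) →
        (∀ j, j ≤ K+1 → NAR C.A (C.q₀, W (K+1) j [Al.c]) (x, W i j [Al.c])) →
        ∃ y, Al.c ∉ C.A.τ y ∧ Al.b ∉ C.A.τ y ∧ AccFrom C.A (y, [Al.c]) ∧
          (∀ j, Reach C.A (C.q₀, W (K+1) j [Al.c]) (y, W 0 j [Al.c])) ∧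
          (∀ j, j ≤ K+1 → NAR C.A (C.q₀, W (K+1) j [Al.c]) (y, W 0 j [Al.c])))
      hpath ?_ ?_
    · -- refl : accepting configuration
      rintro i x rfl hlx hnx
      cases i with
      | succ i' => exact absurd hfin (C.A1 (n := K) (hlx 0))
      | zero =>
        have haz : AccFrom C.A (x, [Al.c]) := by
          rw [← W_zero_zero (ts := [Al.c])]
          exact AccFrom.of_acc hfin
        obtain ⟨y, h1, h2, h3, h4, h5⟩ := C.chain (N := K+1) (r := 0) (by omega) haz
          (fun j => by simpa using hlx j)
        refine ⟨y, h1, h2, h3, fun j => Reach.trans' (hlx j) (h4 j),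
          fun j hj => NAR.trans' (hnx j hj) (h5 j)⟩
    · -- head
      rintro c₁ c₂ hs hrest ih i x rfl hlx hnx
      cases i with
      | zero =>
        have haz : AccFrom C.A (x, [Al.c]) := by
          rw [← W_zero_zero (ts := [Al.c])]
          exact ⟨fin, Relation.ReflTransGen.head hs hrest, hfin⟩
        obtain ⟨y, h1, h2, h3, h4, h5⟩ := C.chain (N := K+1) (r := 0) (by omega) haz
          (fun j => by simpa using hlx j)
        exact ⟨y, h1, h2, h3, fun j => Reach.trans' (hlx j) (h4 j),
          fun j hj => NAR.trans' (hnx j hj) (h5 j)⟩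
      | succ i' =>
        -- current configuration is (x, a^(i'+1) c); not accepting at any padding
        have hnacc : ∀ j, ¬ Acc C.A (x, W (i'+1) j [Al.c]) := by
          intro j
          cases j with
          | zero => exact C.A1 (n := K) (hlx 0)
          | succ j'' => exact C.B1 (n := K+1) (m := j'') (hlx (j''+1))
        obtain ⟨p, v⟩ := c₂
        rcases stepW_dest hs with ⟨i₂, hi₂, ha, hp, rfl⟩ | ⟨j₂, hj₂, _, _, _, _⟩ |
          ⟨hia, _, hc', hp, rfl⟩ | ⟨hia, _, hic, hp, rfl⟩
        · -- a-deletion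
          have hi : i₂ = i' := by omega
          subst hi
          refine ih i₂ p rfl (fun j => Reach.trans' (hlx j) (Reach.single (stepW_a ha hp)))
            (fun j hj => NAR.tail' (hnx j hj) (hnacc j) (stepW_a ha hp))
        · omega
        · -- c-deletion with a's remaining: impossible
          exact absurd hc' (fun hc'' => C.A2 (n := K) (hlx 0)
            (hia.resolve_left (by omega)) hc'')
        · -- E-step
          have ha : Al.a ∈ C.A.τ x := hia.resolve_left (by omega)
          have hbx : Al.b ∈ C.A.τ x := by
            by_contra hbx
            exact C.B2 (n := K+1) (m := 0) (by omega) (hlx 1) (Or.inr ha) hbx hic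
          have hstepj : ∀ j, C.A.Step (x, W (i'+1) j [Al.c]) (p, W (i'+1) j [Al.c]) := by
            intro j
            refine stepW_E (Or.inr ha) (Or.inr hbx) ?_ hp
            intro y hy; simp only [List.mem_singleton] at hy; exact hy ▸ hic
          exact ih (i'+1) p rfl
            (fun j => Reach.trans' (hlx j) (Reach.single (hstepj j)))
            (fun j hj => NAR.tail' (hnx j hj) (hnacc j) (hstepj j))
  exact fun hpath => main _ hpath (K+1) C.q₀ rfl
    (fun j => Relation.ReflTransGen.refl) (fun j hj => NAR.refl _)

/-- The inductive round step: from `y_m` one `b`-deletion and an E-chain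
produce `y_(m+1)`. -/
theorem stepRound (K : ℕ) {m : ℕ} (hm : m + 2 ≤ K + 1) {y : Q}
    (hyb : Al.b ∉ C.A.τ y)
    (hlift : ∀ j, Reach C.A (C.q₀, W (K+1) (m+j) [Al.c]) (y, W 0 j [Al.c]))
    (hnar : ∀ j, m + j ≤ K+1 → NAR C.A (C.q₀, W (K+1) (m+j) [Al.c]) (y, W 0 j [Al.c])) :
    ∃ y', Al.c ∉ C.A.τ y' ∧ Al.b ∉ C.A.τ y' ∧ AccFrom C.A (y', [Al.c]) ∧
      (∀ j, Reach C.A (C.q₀, W (K+1) (m+1+j) [Al.c]) (y', W 0 j [Al.c])) ∧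
      (∀ j, m+1+j ≤ K+1 → NAR C.A (C.q₀, W (K+1) (m+1+j) [Al.c]) (y', W 0 j [Al.c])) ∧
      (∀ j, Reach C.A (y, W 0 (j+1) [Al.c]) (y', W 0 j [Al.c])) := by
  have hacc1 : AccFrom C.A (C.q₀, W (K+1) (m+1) [Al.c]) := C.accW (by omega)
  have hna1 : NAR C.A (C.q₀, W (K+1) (m+1) [Al.c]) (y, W 0 1 [Al.c]) := by
    have := hnar 1 (by omega)
    simpa using this
  have haccy1 : AccFrom C.A (y, W 0 1 [Al.c]) := push_nar C.hδ C.hend hna1 hacc1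
  have hnacc1 : ¬ Acc C.A (y, W 0 1 [Al.c]) := C.notAcc_b hyb
  obtain ⟨⟨p, v⟩, hstep⟩ := exists_step_of_accFrom haccy1 hnacc1
  rcases stepW_dest hstep with ⟨i₂, hi₂, _, _, _⟩ | ⟨j₂, hj₂, _, hb', hp, rfl⟩ |
    ⟨_, hib, _, _, _⟩ | ⟨_, hib, _, _, _⟩
  · omega
  · have hj : j₂ = 0 := by omega
    subst hj
    -- z := p
    have hstepj : ∀ j, C.A.Step (y, W 0 (j+1) [Al.c]) (p, W 0 j [Al.c]) :=
      fun j => stepW_b (Or.inl rfl) hyb hp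
    have haz : AccFrom C.A (p, [Al.c]) := by
      have := push_step C.hδ C.hend haccy1 hnacc1 hstep
      simpa [W_zero_zero] using this
    have hlz : ∀ j, Reach C.A (C.q₀, W (K+1) (m+1+j) [Al.c]) (p, W 0 j [Al.c]) := by
      intro j
      have h1 := hlift (1+j)
      have he : m + (1+j) = m+1+j := by omega
      rw [he] at h1
      exact Reach.trans' h1 (Reach.single (by simpa [Nat.add_comm 1 j] using hstepj j))
    obtain ⟨y', h1, h2, h3, h4, h5⟩ := C.chain (N := K+1) (r := m+1) hm haz hlz
    refine ⟨y', h1, h2, h3, fun j => Reach.trans' (hlz j) (h4 j), ?_, ?_⟩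
    · intro j hj
      have hn := hnar (1+j) (by omega)
      have he : m + (1+j) = m+1+j := by omega
      rw [he] at hn
      have hstep' : C.A.Step (y, W 0 (1+j) [Al.c]) (p, W 0 j [Al.c]) := by
        simpa [Nat.add_comm 1 j] using hstepj j
      have hnacc' : ¬ Acc C.A (y, W 0 (1+j) [Al.c]) := by
        rw [Nat.add_comm 1 j]
        exact C.notAcc_b hyb
      exact NAR.trans' (NAR.tail' hn hnacc' hstep') (h5 j)
    · exact fun j => Reach.trans' (Reach.single (hstepj j)) (h4 j)
  · exact absurd (hib.resolve_left (by omega)) hyb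
  · exact absurd (hib.resolve_left (by omega)) hyb

end Ctx

end Impossibility

namespace Impossibility

namespace Ctx

open List

variable {Q : Type} (C : Ctx Q)

/-- The ladder of states `y 0, ..., y k`. -/
theorem ladder (K : ℕ) : ∀ k, k ≤ K → ∃ y : ℕ → Q,
    (∀ m, m ≤ k → Al.c ∉ C.A.τ (y m) ∧ Al.b ∉ C.A.τ (y m) ∧ AccFrom C.A (y m, [Al.c]) ∧
      (∀ j, Reach C.A (C.q₀, W (K+1) (m+j) [Al.c]) (y m, W 0 j [Al.c])) ∧
      (∀ j, m+j ≤ K+1 → NAR C.A (C.q₀, W (K+1) (m+j) [Al.c]) (y m, W 0 j [Al.c]))) ∧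
    (∀ m, m < k → ∀ j, Reach C.A (y m, W 0 (j+1) [Al.c]) (y (m+1), W 0 j [Al.c])) := by
  intro k
  induction k with
  | zero =>
    intro _
    obtain ⟨y₀, h1, h2, h3, h4, h5⟩ := C.base K
    refine ⟨fun _ => y₀, ?_, ?_⟩
    · intro m hm
      interval_cases m
      exact ⟨h1, h2, h3, fun j => by simpa using h4 j, fun j hj => by
        simpa using h5 j (by omega)⟩
    · intro m hm; omega
  | succ k ih =>
    intro hk
    obtain ⟨y, hprops, hrung⟩ := ih (by omega)
    obtain ⟨hc, hb, hacc, hlift, hnar⟩ := hprops k (le_refl k)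
    obtain ⟨y', h1, h2, h3, h4, h5, h6⟩ := C.stepRound K (m := k) (by omega) hb hlift hnar
    refine ⟨fun m => if m ≤ k then y m else y', ?_, ?_⟩
    · intro m hm
      by_cases hmk : m ≤ k
      · simp only [hmk, if_true]
        exact hprops m hmk
      · have hm1 : m = k + 1 := by omega
        subst hm1
        simp only [hmk, if_false]
        exact ⟨h1, h2, h3, h4, h5⟩
    · intro m hm j
      by_cases hmk : m < k
      · have e1 : m ≤ k := by omega
        have e2 : m + 1 ≤ k := by omega
        simp only [e1, if_true, e2]
        exact hrung m hmk j
      · have hm1 : m = k := by omega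
        subst hm1
        have e1 : m ≤ m := le_refl m
        have e2 : ¬ (m + 1 ≤ m) := by omega
        simp only [e1, if_true, e2, if_false]
        exact h6 j

theorem false_of_ctx {Q' : Type} [Fintype Q'] (C : Ctx Q') : False := by
  set K := Fintype.card Q' with hK
  obtain ⟨y, hprops, hrung⟩ := C.ladder K K (le_refl K)
  -- pigeonhole on y 0 .. y K
  obtain ⟨k₁, k₂, hne, hEq⟩ := Fintype.exists_ne_map_eq_of_card_lt
    (fun m : Fin (K+1) => y m) (by simp; omega)
  -- wlog k₁ < k₂
  have main : ∀ (k k' : ℕ), k < k' → k' ≤ K → y k = y k' → False := by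
    intro k k' hkk' hk'K hyEq
    have climb : ∀ jj m, k ≤ m → m < k' → AccFrom C.A (y m, W 0 jj [Al.c]) := by
      intro jj
      induction jj with
      | zero =>
        intro m hm hm'
        have := (hprops m (by omega)).2.2.1
        rwa [W_zero_zero]
      | succ jj ihjj =>
        intro m hm hm'
        have hr := hrung m (by omega) jj
        by_cases hm1 : m + 1 < k'
        · exact C.accFrom_mono hr (ihjj (m+1) (by omega) hm1)
        · have hm1' : m + 1 = k' := by omega
          have hacck : AccFrom C.A (y k, W 0 jj [Al.c]) := ihjj k (le_refl k) hkk'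
          rw [hyEq] at hacck
          rw [← hm1'] at hacck
          exact C.accFrom_mono hr hacck
    -- the rejected word a^(K+1) b^M c with M = K+1 + (k'-k)
    set M := (K+1) + (k' - k) with hM
    have hlift := (hprops k' hk'K).2.2.2.1 (M - k')
    have he : k' + (M - k') = M := by omega
    rw [he] at hlift
    have haccy : AccFrom C.A (y k', W 0 (M - k') [Al.c]) := by
      rw [← hyEq]
      exact climb (M - k') k (le_refl k) hkk'
    have : AccFrom C.A (C.q₀, W (K+1) M [Al.c]) := C.accFrom_mono hlift haccy
    exact C.rejW (by omega) this
  rcases Nat.lt_or_ge (k₁ : ℕ) (k₂ : ℕ) with h | h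
  · exact main k₁ k₂ h (by omega) hEq
  · have h' : (k₂ : ℕ) < (k₁ : ℕ) := by
      rcases Nat.lt_or_ge (k₂ : ℕ) (k₁ : ℕ) with h' | h'
      · exact h'
      · exact absurd (Fin.ext (by omega)) hne
    exact main k₂ k₁ h' (by omega) hEq.symm

end Ctx

end Impossibility

/-- L_c is not accepted by any RDFAwtl. -/
theorem Lc_not_RDFAwtl : Lc ∉ RDFAwtlLangs Al := by
  rintro ⟨Q, instF, A, ⟨⟨q₀, hI⟩, hδ, hend⟩, hlang⟩
  haveI := instF
  exact Impossibility.Ctx.false_of_ctx ⟨A, q₀, hI, hδ, hend, hlang⟩
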